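/- Let Ω ⊆ ℝᵈ be a convex set and a ∈ Ω. Let K be the supporting cone of Ω at a, i.e., K := closure( { a + α(x − a) : α ≥ 0, x ∈ Ω } ). Then K is a local tent of Ω at a. -/

import Mathlib

open scoped RealInnerProductSpace
open Asymptotics Topology

noncomputable section

abbrev Euc (d : ℕ) : Type := EuclideanSpace ℝ (Fin d)

/-- `K` is a convex cone with vertex `a`. -/
def IsConvexCone {E : Type*} [NormedAddCommGroup E] [InnerProductSpace ℝ E]
    (a : E) (K : Set E) : Prop :=
  a ∈ K ∧ (∀ x ∈ K, ∀ α : ℝ, 0 ≤ α → a + α • (x - a) ∈ K) ∧ Convex ℝ K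

/-- The polar (dual) cone of a cone `K` with vertex `a`. -/
def polarCone {E : Type*} [NormedAddCommGroup E] [InnerProductSpace ℝ E]
    (a : E) (K : Set E) : Set E :=
  {y | ∀ x ∈ K, ⟪y, x - a⟫ ≤ 0}

/-- `Q` is a tent of `Ω` at `a`. -/
def IsTent {E : Type*} [NormedAddCommGroup E] [InnerProductSpace ℝ E]
    (Ω : Set E) (a : E) (Q : Set E) : Prop :=
  IsConvexCone a Q ∧
  ∃ ψ : E → E, (fun x => ψ x - x) =o[𝓝 a] (fun x => x - a) ∧
    ∃ ε : ℝ, 0 < ε ∧ ∀ x ∈ Q, ‖x - a‖ < ε → ψ x ∈ Ω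

/-- `Q` is a local tent of `Ω` at `a`. -/
def IsLocalTent {E : Type*} [NormedAddCommGroup E] [InnerProductSpace ℝ E]
    (Ω : Set E) (a : E) (Q : Set E) : Prop :=
  IsConvexCone a Q ∧
  ∀ x ∈ intrinsicInterior ℝ Q, ∃ Q' : Set E, Q' ⊆ Q ∧ IsTent Ω a Q' ∧
    x ∈ intrinsicInterior ℝ Q' ∧ affineSpan ℝ Q' = affineSpan ℝ Q

/-- A family of convex cones with common vertex `a` is separable. -/
def SeparableFam {E : Type*} [NormedAddCommGroup E] [InnerProductSpace ℝ E]
    {ι : Type*} (a : E) (K : ι → Set E) : Prop :=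
  ∃ (i : ι) (c : E), c ≠ 0 ∧ (∀ x ∈ K i, ⟪c, x - a⟫ ≤ 0) ∧
    ∀ x : E, (∀ j, j ≠ i → x ∈ K j) → 0 ≤ ⟪c, x - a⟫

namespace Stmt15Aux

variable {d : ℕ} {Ω : Set (Euc d)} {a : Euc d}

def K0 (Ω : Set (Euc d)) (a : Euc d) : Set (Euc d) :=
  {y | ∃ (α : ℝ) (x : Euc d), 0 ≤ α ∧ x ∈ Ω ∧ y = a + α • (x - a)}

lemma a_mem_K0 (ha : a ∈ Ω) : a ∈ K0 Ω a := ⟨0, a, le_rfl, ha, by simp⟩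

lemma K0_convex (hΩ : Convex ℝ Ω) : Convex ℝ (K0 Ω a) := by
  rintro p ⟨α, x, hα, hx, rfl⟩ q ⟨β, y, hβ, hy, rfl⟩ s t hs ht hst
  obtain rfl : t = 1 - s := by linarith
  by_cases hγ : s * α + (1 - s) * β = 0
  · have h1 : s * α = 0 := by nlinarith [mul_nonneg hs hα, mul_nonneg ht hβ]
    have h2 : (1 - s) * β = 0 := by nlinarith [mul_nonneg hs hα, mul_nonneg ht hβ]
    refine ⟨0, x, le_rfl, hx, ?_⟩
    have e : s • (a + α • (x - a)) + (1 - s) • (a + β • (y - a))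
        = a + (s * α) • (x - a) + ((1 - s) * β) • (y - a) := by module
    rw [e, h1, h2]; simp
  · have hγpos : 0 < s * α + (1 - s) * β := by
      rcases lt_or_eq_of_le (by positivity : (0:ℝ) ≤ s * α + (1 - s) * β) with h | h
      · exact h
      · exact absurd h.symm hγ
    set γ := s * α + (1 - s) * β with hγdef
    refine ⟨γ, (s * α / γ) • x + ((1 - s) * β / γ) • y, hγpos.le,
      hΩ hx hy (div_nonneg (by positivity) hγpos.le) (div_nonneg (by positivity) hγpos.le)
        (by rw [← add_div, div_self hγ]), ?_⟩
    match_scalars <;> field_simp <;> ring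

lemma K0_cone {p : Euc d} {α : ℝ} (hp : p ∈ K0 Ω a) (hα : 0 ≤ α) :
    a + α • (p - a) ∈ K0 Ω a := by
  obtain ⟨β, x, hβ, hx, rfl⟩ := hp
  exact ⟨α * β, x, mul_nonneg hα hβ, hx, by module⟩

lemma K_cone {p : Euc d} {α : ℝ} (hp : p ∈ closure (K0 Ω a)) (hα : 0 ≤ α) :
    a + α • (p - a) ∈ closure (K0 Ω a) := by
  have hcont : Continuous (fun q : Euc d => a + α • (q - a)) := by fun_prop
  exact map_mem_closure (f := fun q : Euc d => a + α • (q - a)) hcont hp (fun q hq => K0_cone hq hα)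

lemma key (hΩ : Convex ℝ Ω) (ha : a ∈ Ω) {ε : ℝ} (hε : 0 < ε) :
    ∃ δ > 0, ∀ p ∈ closure (K0 Ω a), ‖p - a‖ < δ →
      ∃ ω ∈ Ω, ‖ω - p‖ ≤ ε * ‖p - a‖ := by
  classical
  set C := closure (K0 Ω a) ∩ Metric.sphere a 1 with hC
  have hclaim : ∀ w ∈ C, ∃ u : Euc d, ∃ t : ℝ, 0 < t ∧ ‖u - (w - a)‖ < ε / 2 ∧
      ∀ s : ℝ, 0 ≤ s → s ≤ t → a + s • u ∈ Ω := by
    rintro w ⟨hwK, hws⟩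
    have hw1 : ‖w - a‖ = 1 := by
      simpa [dist_eq_norm] using hws
    have hε' : (0:ℝ) < min (1/2) (ε/2) := by positivity
    obtain ⟨q, hq, hdq⟩ := Metric.mem_closure_iff.mp hwK _ hε'
    obtain ⟨α, x, hα, hx, rfl⟩ := hq
    have hdq' : ‖w - (a + α • (x - a))‖ < min (1/2) (ε/2) := by
      simpa [dist_eq_norm] using hdq
    have hqa : ‖(a + α • (x - a)) - a‖ = α * ‖x - a‖ := by
      simp [norm_smul, abs_of_nonneg hα]
    have htri : ‖w - a‖ ≤ ‖w - (a + α • (x - a))‖ + ‖(a + α • (x - a)) - a‖ := by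
      rw [← sub_add_sub_cancel w (a + α • (x - a)) a]; exact norm_add_le _ _
    have hge : (1:ℝ)/2 ≤ α * ‖x - a‖ := by
      have := min_le_left (1/2 : ℝ) (ε/2)
      rw [hw1] at htri; rw [hqa] at htri; linarith
    have hαpos : 0 < α := by nlinarith [norm_nonneg (x - a)]
    refine ⟨(a + α • (x - a)) - a, α⁻¹, inv_pos.mpr hαpos, ?_, ?_⟩
    · have : ‖((a + α • (x - a)) - a) - (w - a)‖ = ‖w - (a + α • (x - a))‖ := by
        rw [← norm_neg]; congr 1; abel
      rw [this]
      exact lt_of_lt_of_le hdq' (min_le_right _ _)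
    · intro s hs0 hsle
      have hc1 : s * α ≤ 1 := by
        have := mul_le_mul_of_nonneg_right hsle hαpos.le
        rwa [inv_mul_cancel₀ hαpos.ne'] at this
      have hmem := hΩ ha hx (by linarith : (0:ℝ) ≤ 1 - s * α)
        (by positivity : (0:ℝ) ≤ s * α) (by ring)
      have e : a + s • ((a + α • (x - a)) - a) = (1 - s * α) • a + (s * α) • x := by
        module
      rwa [e]
  have hcov : C ⊆ ⋃ w ∈ C, Metric.ball w (ε/2) := fun w hw =>
    Set.mem_biUnion hw (Metric.mem_ball_self (by positivity))
  have hcomp : IsCompact C := (isCompact_sphere a 1).inter_left isClosed_closure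
  choose! u t ht hu hsΩ using hclaim
  obtain ⟨b', hb'sub, hb'fin, hb'cov⟩ :=
    hcomp.elim_finite_subcover_image (fun w _ => Metric.isOpen_ball) hcov
  obtain ⟨δ, hδpos, hδle⟩ : ∃ δ, 0 < δ ∧ ∀ w ∈ b', δ ≤ t w := by
    rcases hb'fin.toFinset.eq_empty_or_nonempty with hF | hF
    · refine ⟨1, one_pos, fun w hw => absurd ?_ (by simp [hF] : w ∉ hb'fin.toFinset)⟩
      exact hb'fin.mem_toFinset.mpr hw
    · refine ⟨hb'fin.toFinset.inf' hF t, ?_, fun w hw =>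
        Finset.inf'_le t (hb'fin.mem_toFinset.mpr hw)⟩
      rw [Finset.lt_inf'_iff]
      intro w hw
      exact ht w (hb'sub (hb'fin.mem_toFinset.mp hw))
  refine ⟨δ, hδpos, ?_⟩
  intro p hp hpδ
  by_cases hpa : p = a
  · exact ⟨a, ha, by simp [hpa]⟩
  · have hr : 0 < ‖p - a‖ := norm_sub_pos_iff.mpr hpa
    set r := ‖p - a‖ with hrdef
    set w := a + r⁻¹ • (p - a) with hw
    have hwK : w ∈ closure (K0 Ω a) := K_cone hp (by positivity)
    have hws : w ∈ Metric.sphere a 1 := by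
      have : ‖w - a‖ = 1 := by
        rw [hw, add_sub_cancel_left, norm_smul, Real.norm_eq_abs,
          abs_of_nonneg (inv_nonneg.mpr hr.le), ← hrdef, inv_mul_cancel₀ hr.ne']
      simpa [dist_eq_norm] using this
    have hwC : w ∈ C := ⟨hwK, hws⟩
    have hww := hb'cov hwC
    simp only [Set.mem_iUnion] at hww
    obtain ⟨w₀, hw₀b, hwball⟩ := hww
    have hw₀C : w₀ ∈ C := hb'sub hw₀b
    have hrt : r ≤ t w₀ := le_trans hpδ.le (hδle _ hw₀b)
    refine ⟨a + r • u w₀, hsΩ w₀ hw₀C r hr.le hrt, ?_⟩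
    have hp' : p = a + r • (w - a) := by
      rw [hw]
      rw [add_sub_cancel_left, smul_smul, mul_inv_cancel₀ hr.ne', one_smul]
      abel
    have e : (a + r • u w₀) - p = r • (u w₀ - (w - a)) := by
      rw [hp']; module
    have hb1 : ‖u w₀ - (w₀ - a)‖ < ε/2 := hu w₀ hw₀C
    have hb2 : ‖w₀ - w‖ < ε/2 := by
      have := hwball
      rw [Metric.mem_ball, dist_eq_norm] at this
      rwa [norm_sub_rev]
    have htri2 : ‖u w₀ - (w - a)‖ ≤ ‖u w₀ - (w₀ - a)‖ + ‖w₀ - w‖ := by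
      have e2 : u w₀ - (w - a) = (u w₀ - (w₀ - a)) + (w₀ - w) := by abel
      rw [e2]; exact norm_add_le _ _
    calc ‖(a + r • u w₀) - p‖ = r * ‖u w₀ - (w - a)‖ := by
          rw [e, norm_smul, Real.norm_eq_abs, abs_of_nonneg hr.le]
      _ ≤ ε * r := by nlinarith

lemma key' (hΩ : Convex ℝ Ω) (ha : a ∈ Ω) {ε : ℝ} (hε : 0 < ε) :
    ∃ δ > 0, ∀ p ∈ closure (K0 Ω a), ‖p - a‖ < δ →
      Metric.infDist p Ω ≤ ε * ‖p - a‖ := by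
  obtain ⟨δ, hδ, h⟩ := key hΩ ha hε
  refine ⟨δ, hδ, fun p hp hpδ => ?_⟩
  obtain ⟨ω, hω, hle⟩ := h p hp hpδ
  exact le_trans (Metric.infDist_le_dist_of_mem hω) (by rwa [dist_eq_norm, norm_sub_rev])

end Stmt15Aux

/-- The supporting cone of a convex set `Ω` at `a ∈ Ω` is a local tent of `Ω`
at `a`. -/
theorem stmt15 (d : ℕ) (Ω : Set (Euc d)) (hΩ : Convex ℝ Ω) (a : Euc d)
    (ha : a ∈ Ω) :
    IsLocalTent Ω a
      (closure {y | ∃ (α : ℝ) (x : Euc d), 0 ≤ α ∧ x ∈ Ω ∧ y = a + α • (x - a)}) := by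
  classical
  open Stmt15Aux in
  show IsLocalTent Ω a (closure (Stmt15Aux.K0 Ω a))
  set K := closure (Stmt15Aux.K0 Ω a) with hKdef
  have hcone : IsConvexCone a K :=
    ⟨subset_closure (Stmt15Aux.a_mem_K0 ha),
     fun p hp α hα => Stmt15Aux.K_cone hp hα,
     (Stmt15Aux.K0_convex hΩ).closure⟩
  refine ⟨hcone, ?_⟩
  intro x hx
  refine ⟨K, subset_rfl, ⟨hcone, ?_⟩, hx, rfl⟩
  have hΩne : Ω.Nonempty := ⟨a, ha⟩
  have hex : ∀ p : Euc d, ∃ ω : Euc d,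
      (p ∈ K ∧ p ≠ a → ω ∈ Ω ∧ dist p ω < Metric.infDist p Ω + ‖p - a‖ ^ 2) ∧
      (¬(p ∈ K ∧ p ≠ a) → ω = p) := by
    intro p
    by_cases h : p ∈ K ∧ p ≠ a
    · have hpos : 0 < ‖p - a‖ ^ 2 := by
        have := norm_sub_pos_iff.mpr h.2
        positivity
      obtain ⟨ω, hω, hd⟩ := (Metric.infDist_lt_iff hΩne).mp
        (lt_add_of_pos_right (Metric.infDist p Ω) hpos)
      exact ⟨ω, fun _ => ⟨hω, hd⟩, fun h' => absurd h h'⟩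
    · exact ⟨p, fun h' => absurd h' h, fun _ => rfl⟩
  choose ψ hψ₁ hψ₂ using hex
  refine ⟨ψ, ?_, 1, one_pos, ?_⟩
  · rw [Asymptotics.isLittleO_iff]
    intro c hc
    obtain ⟨δ₁, hδ₁, hkey⟩ := Stmt15Aux.key' hΩ ha (half_pos hc)
    have hδpos : 0 < min δ₁ (c / 2) := lt_min hδ₁ (half_pos hc)
    filter_upwards [Metric.ball_mem_nhds a hδpos] with p hp
    have hpn : ‖p - a‖ < min δ₁ (c / 2) := by
      rwa [Metric.mem_ball, dist_eq_norm] at hp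
    by_cases h : p ∈ K ∧ p ≠ a
    · have h1 := (hψ₁ p h).2
      have h2 : Metric.infDist p Ω ≤ (c / 2) * ‖p - a‖ :=
        hkey p h.1 (lt_of_lt_of_le hpn (min_le_left _ _))
      have h3 : ‖p - a‖ ≤ c / 2 := (lt_of_lt_of_le hpn (min_le_right _ _)).le
      have h4 : ‖ψ p - p‖ = dist p (ψ p) := by rw [dist_eq_norm, norm_sub_rev]
      have h5 : ‖p - a‖ ^ 2 ≤ (c / 2) * ‖p - a‖ := by nlinarith [norm_nonneg (p - a)]
      rw [h4]
      linarith
    · rw [hψ₂ p h]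
      simp only [sub_self, norm_zero]
      positivity
  · intro y hyK _
    by_cases h : y ∈ K ∧ y ≠ a
    · exact (hψ₁ y h).1
    · have hya : y = a := by
        by_contra hne
        exact h ⟨hyK, hne⟩
      rw [hψ₂ y h, hya]
      exact ha
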